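/- Under (A1) and the mutual coherence condition (T−1)μ < 1, the SDAR least-squares update satisfies ‖β^{k+1} − β̃‖_∞ ≤ ((1+μ)/(1−(T−1)μ))·‖β̃|_{A*_J\Aᵏ}‖_∞ + h_∞(T)/(1−(T−1)μ), where h_∞(T) = max_{|A|≤T} ‖X_Aᵀη̃‖_∞/n. -/

import Mathlib

open Matrix Finset

/-- Lemma 5(ii) of the SDAR paper: under (A1) and the mutual
coherence condition `(T−1)μ < 1`, the SDAR least-squares update satisfies
`‖β^{k+1} − β̃‖_∞ ≤ ((1+μ)/(1−(T−1)μ)) ‖β̃|_{A*_J \ Aᵏ}‖_∞ + h_∞(T)/(1−(T−1)μ)`. -/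
theorem sdar_ls_update_sup_norm_bound {n p : ℕ} (hn : 0 < n)
    (X : Matrix (Fin n) (Fin p) ℝ)
    (T J : ℕ) (hJT : J ≤ T) (hT : 1 ≤ T)
    (Astar : Finset (Fin p)) (hAstar : Astar.card = J)
    (βt : Fin p → ℝ) (η : Fin n → ℝ) (y : Fin n → ℝ)
    (hβtsupp : ∀ i ∉ Astar, βt i = 0)
    (hy : y = X.mulVec βt + η)
    (μ : ℝ) (hμ0 : 0 ≤ μ)
    (hnorm : ∀ j : Fin p, ∑ i, (X i j) ^ 2 = (n : ℝ))
    (hμ : ∀ i j : Fin p, i ≠ j → |(Xᵀ * X) i j| ≤ (n : ℝ) * μ)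
    (hcoh : ((T : ℝ) - 1) * μ < 1)
    (h : ℝ)
    -- h bounds h_∞(T) = max_{|A|≤T} ‖X_Aᵀ η‖_∞ / n
    (hh : ∀ A : Finset (Fin p), A.card ≤ T → ∀ i ∈ A,
      |Xᵀ.mulVec η i| / (n : ℝ) ≤ h)
    (Ak : Finset (Fin p)) (hAk : Ak.card = T)
    (βk1 : Fin p → ℝ)
    (hβk1supp : ∀ i ∉ Ak, βk1 i = 0)
    -- normal equations for least squares on Ak
    (hβk1ls : ∀ i ∈ Ak, Xᵀ.mulVec (X.mulVec βk1 - y) i = 0) :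
    ‖(fun i => βk1 i - βt i)‖
      ≤ ((1 + μ) / (1 - ((T : ℝ) - 1) * μ)) *
          ‖(fun i => if i ∈ Astar \ Ak then βt i else 0)‖
        + h / (1 - ((T : ℝ) - 1) * μ) := by
  have hn' : (0:ℝ) < (n:ℝ) := by exact_mod_cast hn
  set D : ℝ := 1 - ((T : ℝ) - 1) * μ with hDdef
  have hD : 0 < D := by simp only [hDdef]; linarith
  have hT1 : (0:ℝ) ≤ (T:ℝ) - 1 := by
    have : (1:ℝ) ≤ (T:ℝ) := by exact_mod_cast hT
    linarith
  -- Ak is nonempty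
  have hAkne : Ak.Nonempty := by
    rw [← Finset.card_pos, hAk]; exact hT
  obtain ⟨iw, hiw⟩ := hAkne
  set B : ℝ := ‖(fun i => if i ∈ Astar \ Ak then βt i else 0)‖ with hBdef
  have hB0 : 0 ≤ B := norm_nonneg _
  have hBle : ∀ j, j ∈ Astar \ Ak → |βt j| ≤ B := by
    intro j hj
    have h1 := norm_le_pi_norm (fun i => if i ∈ Astar \ Ak then βt i else 0) j
    simpa only [if_pos hj, Real.norm_eq_abs] using h1
  have hh0 : 0 ≤ h := by
    have := hh Ak (le_of_eq hAk) iw hiw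
    have h2 : (0:ℝ) ≤ |Xᵀ.mulVec η iw| / (n:ℝ) := by positivity
    linarith
  clear_value D B
  set δ : Fin p → ℝ := fun i => βk1 i - βt i with hδdef
  -- off Ak, |δ i| ≤ B
  have hδoff : ∀ i ∉ Ak, |δ i| ≤ B := by
    intro i hi
    have h1 : βk1 i = 0 := hβk1supp i hi
    by_cases hi2 : i ∈ Astar
    · have := hBle i (Finset.mem_sdiff.mpr ⟨hi2, hi⟩)
      simp only [hδdef, h1, zero_sub, abs_neg]
      exact this
    · simp [hδdef, h1, hβtsupp i hi2, hB0]
  -- max over Ak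
  have hAkne2 : Ak.Nonempty := ⟨iw, hiw⟩
  set M : ℝ := Ak.sup' hAkne2 (fun i => |δ i|) with hMdef
  have hMle : ∀ i ∈ Ak, |δ i| ≤ M := fun i hi => Finset.le_sup' (fun j => |δ j|) hi
  obtain ⟨i₀, hi₀, hMeq⟩ := Finset.exists_mem_eq_sup' hAkne2 (fun i => |δ i|)
  have hMeq' : M = |δ i₀| := hMeq
  clear_value M
  have hM0 : 0 ≤ M := le_trans (abs_nonneg (δ i₀)) (hMle i₀ hi₀)
  -- Gram matrix equation at i₀
  set G : Matrix (Fin p) (Fin p) ℝ := Xᵀ * X with hGdef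
  have hGdiag : ∀ i : Fin p, G i i = (n:ℝ) := by
    intro i
    have : G i i = ∑ k, X k i ^ 2 := by
      simp [hGdef, Matrix.mul_apply, Matrix.transpose_apply, sq]
    rw [this, hnorm]
  have hkey : G.mulVec δ i₀ = Xᵀ.mulVec η i₀ := by
    have h1 := hβk1ls i₀ hi₀
    have h2 : X.mulVec βk1 - y = X.mulVec δ - η := by
      rw [hy]
      funext k
      simp [hδdef, Matrix.mulVec, dotProduct, mul_sub, Finset.sum_sub_distrib]
      ring
    rw [h2] at h1
    have h3 : Xᵀ.mulVec (X.mulVec δ - η) i₀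
        = Xᵀ.mulVec (X.mulVec δ) i₀ - Xᵀ.mulVec η i₀ := by
      simp [Matrix.mulVec, dotProduct, mul_sub, Finset.sum_sub_distrib]
    rw [h3] at h1
    have h4 : Xᵀ.mulVec (X.mulVec δ) = G.mulVec δ := by
      rw [hGdef, ← Matrix.mulVec_mulVec]
    rw [h4] at h1
    linarith
  -- expand mulVec
  have hexp : (n:ℝ) * δ i₀ + ∑ j ∈ Finset.univ.erase i₀, G i₀ j * δ j
      = Xᵀ.mulVec η i₀ := by
    rw [← hkey]
    have : G.mulVec δ i₀ = ∑ j, G i₀ j * δ j := by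
      simp [Matrix.mulVec, dotProduct]
    rw [this, ← Finset.add_sum_erase _ _ (Finset.mem_univ i₀), hGdiag]
  -- bound |Xᵀη i₀|
  have hη : |Xᵀ.mulVec η i₀| ≤ (n:ℝ) * h := by
    have := hh Ak (le_of_eq hAk) i₀ hi₀
    rw [div_le_iff₀ hn'] at this
    linarith [this]
  -- bound the off-diagonal sum
  have hSle : ∑ j ∈ Finset.univ.erase i₀, |G i₀ j * δ j|
      ≤ ((T:ℝ) - 1) * ((n:ℝ) * μ * M) + (T:ℝ) * ((n:ℝ) * μ * B) := by
    have hsub : (Ak.erase i₀) ∪ (Astar \ Ak) ⊆ Finset.univ.erase i₀ := by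
      intro j hj
      rcases Finset.mem_union.mp hj with hj1 | hj1
      · exact Finset.mem_erase.mpr ⟨(Finset.mem_erase.mp hj1).1, Finset.mem_univ j⟩
      · refine Finset.mem_erase.mpr ⟨?_, Finset.mem_univ j⟩
        intro hji
        exact (Finset.mem_sdiff.mp hj1).2 (hji ▸ hi₀)
    have hzero : ∀ j ∈ Finset.univ.erase i₀,
        j ∉ (Ak.erase i₀) ∪ (Astar \ Ak) → |G i₀ j * δ j| = 0 := by
      intro j hj hj2
      have hjAk : j ∉ Ak := by
        intro hjAk
        exact hj2 (Finset.mem_union_left _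
          (Finset.mem_erase.mpr ⟨(Finset.mem_erase.mp hj).1, hjAk⟩))
      have hjAs : j ∉ Astar := by
        intro hjAs
        exact hj2 (Finset.mem_union_right _ (Finset.mem_sdiff.mpr ⟨hjAs, hjAk⟩))
      simp [hδdef, hβk1supp j hjAk, hβtsupp j hjAs]
    have heq : ∑ j ∈ Finset.univ.erase i₀, |G i₀ j * δ j|
        = ∑ j ∈ (Ak.erase i₀) ∪ (Astar \ Ak), |G i₀ j * δ j| :=
      (Finset.sum_subset hsub hzero).symm
    rw [heq]
    have hdisj : Disjoint (Ak.erase i₀) (Astar \ Ak) := by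
      apply Finset.disjoint_left.mpr
      intro j hj1 hj2
      exact (Finset.mem_sdiff.mp hj2).2 (Finset.mem_of_mem_erase hj1)
    rw [Finset.sum_union hdisj]
    have h1 : ∑ j ∈ Ak.erase i₀, |G i₀ j * δ j| ≤ ((T:ℝ) - 1) * ((n:ℝ) * μ * M) := by
      have hcard : ((Ak.erase i₀).card : ℝ) = (T:ℝ) - 1 := by
        rw [Finset.card_erase_of_mem hi₀, hAk, Nat.cast_sub hT, Nat.cast_one]
      calc ∑ j ∈ Ak.erase i₀, |G i₀ j * δ j|
          ≤ ∑ _j ∈ Ak.erase i₀, (n:ℝ) * μ * M := by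
            apply Finset.sum_le_sum
            intro j hj
            rw [abs_mul]
            exact mul_le_mul (hμ i₀ j (fun hij => (Finset.mem_erase.mp hj).1 hij.symm))
              (hMle j (Finset.mem_of_mem_erase hj)) (abs_nonneg _)
              (by positivity)
        _ = ((T:ℝ) - 1) * ((n:ℝ) * μ * M) := by
            rw [Finset.sum_const, nsmul_eq_mul, hcard]
    have h2 : ∑ j ∈ Astar \ Ak, |G i₀ j * δ j| ≤ (T:ℝ) * ((n:ℝ) * μ * B) := by
      have hcard : ((Astar \ Ak).card : ℝ) ≤ (T:ℝ) := by
        have : (Astar \ Ak).card ≤ J := hAstar ▸ Finset.card_le_card (Finset.sdiff_subset)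
        exact_mod_cast le_trans this hJT
      calc ∑ j ∈ Astar \ Ak, |G i₀ j * δ j|
          ≤ ∑ _j ∈ Astar \ Ak, (n:ℝ) * μ * B := by
            apply Finset.sum_le_sum
            intro j hj
            rw [abs_mul]
            have hji : i₀ ≠ j := fun hij => (Finset.mem_sdiff.mp hj).2 (hij ▸ hi₀)
            have hδj : |δ j| ≤ B := hδoff j (Finset.mem_sdiff.mp hj).2
            exact mul_le_mul (hμ i₀ j hji) hδj (abs_nonneg _) (by positivity)
        _ = ((Astar \ Ak).card : ℝ) * ((n:ℝ) * μ * B) := by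
            rw [Finset.sum_const, nsmul_eq_mul]
        _ ≤ (T:ℝ) * ((n:ℝ) * μ * B) := by
            apply mul_le_mul_of_nonneg_right hcard (by positivity)
    linarith
  -- main inequality: M ≤ ((1+μ)B + h)/D
  have hMbound : M * D ≤ (1 + μ) * B + h := by
    have h1 : (n:ℝ) * |δ i₀| ≤ |Xᵀ.mulVec η i₀|
        + ∑ j ∈ Finset.univ.erase i₀, |G i₀ j * δ j| := by
      have : (n:ℝ) * δ i₀ = Xᵀ.mulVec η i₀
          - ∑ j ∈ Finset.univ.erase i₀, G i₀ j * δ j := by linarith [hexp]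
      calc (n:ℝ) * |δ i₀| = |(n:ℝ) * δ i₀| := by
            rw [abs_mul, abs_of_nonneg hn'.le]
        _ = |Xᵀ.mulVec η i₀ - ∑ j ∈ Finset.univ.erase i₀, G i₀ j * δ j| := by rw [this]
        _ ≤ |Xᵀ.mulVec η i₀| + |∑ j ∈ Finset.univ.erase i₀, G i₀ j * δ j| :=
            abs_sub _ _
        _ ≤ |Xᵀ.mulVec η i₀| + ∑ j ∈ Finset.univ.erase i₀, |G i₀ j * δ j| := by
            gcongr
            exact Finset.abs_sum_le_sum_abs _ _
    have h2 : (n:ℝ) * M ≤ (n:ℝ) * h + (((T:ℝ) - 1) * ((n:ℝ) * μ * M)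
        + (T:ℝ) * ((n:ℝ) * μ * B)) := by
      have hn2 : (n:ℝ) * M = (n:ℝ) * |δ i₀| := by rw [hMeq']
      linarith
    have h4 : (n:ℝ) * (h + ((T:ℝ) - 1) * μ * M + (T:ℝ) * μ * B)
        = (n:ℝ) * h + (((T:ℝ) - 1) * ((n:ℝ) * μ * M) + (T:ℝ) * ((n:ℝ) * μ * B)) := by
      ring
    have h3 : M ≤ h + ((T:ℝ) - 1) * μ * M + (T:ℝ) * μ * B :=
      le_of_mul_le_mul_left (by linarith) hn'
    have hTμ : (T:ℝ) * μ * B ≤ (1 + μ) * B := by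
      have : (T:ℝ) * μ ≤ 1 + μ := by nlinarith
      exact mul_le_mul_of_nonneg_right this hB0
    simp only [hDdef]
    nlinarith
  have hRHS : M ≤ ((1 + μ) / D) * B + h / D := by
    rw [div_mul_eq_mul_div, ← add_div, le_div_iff₀ hD]
    linarith
  have hBRHS : B ≤ ((1 + μ) / D) * B + h / D := by
    have h1 : (1:ℝ) ≤ (1 + μ) / D := by
      rw [le_div_iff₀ hD]
      simp only [hDdef]
      nlinarith
    have h2 : B ≤ ((1 + μ) / D) * B := le_mul_of_one_le_left hB0 h1
    have h3 : 0 ≤ h / D := by positivity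
    linarith
  -- final bound on the pi norm
  have hfin : ∀ i, |δ i| ≤ ((1 + μ) / D) * B + h / D := by
    intro i
    by_cases hi : i ∈ Ak
    · exact le_trans (hMle i hi) hRHS
    · exact le_trans (hδoff i hi) hBRHS
  have hpos : 0 ≤ ((1 + μ) / D) * B + h / D := le_trans hB0 hBRHS
  refine (pi_norm_le_iff_of_nonneg hpos).mpr fun i => ?_
  rw [Real.norm_eq_abs]
  exact hfin i
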